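/- In the de Bruijn graph of span n, a minimal walk starting at the maximal vertex m (at each step taking the unvisited outgoing arc of minimal label) is an Eulerian circuit if and only if the subgraph T — consisting of the maximal-label outgoing arc of each vertex v ≠ m — is a spanning tree converging to m (contains no cycle). -/
import Mathlib


/-- One step in the de Bruijn graph of span `n`: from vertex `u` follow the arc with
label `b`, arriving at `u.tail ++ [b]`. -/
def dbStep {A : Type*} (u : List A) (b : A) : List A := u.tail ++ [b]

/-- The vertex reached after the first `i` steps of the walk with label `s` starting
at vertex `m`. -/
def dbVtx {A : Type*} (m s : List A) (i : ℕ) : List A := (s.take i).foldl dbStep m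

/-- A minimal walk in the de Bruijn graph of span `n` starting at the lexicographically
maximal vertex `m` (at each step taking the unvisited outgoing arc of minimal label,
stopping only when the current vertex has no unvisited outgoing arc) is an Eulerian
circuit if and only if the subgraph `T` — consisting of the maximal-label outgoing arc
`γ v` of each vertex `v ≠ m` — is a spanning tree converging to `m`. -/
theorem minimal_walk_eulerian_iff_T_tree {A : Type*} [LinearOrder A] [Fintype A]
    (n : ℕ) (hn : 0 < n) (L : Set (List A)) (V : Finset (List A))
    (m : List A) (γ : List A → A) (s : List A)
    -- de Bruijn graph of span n: vertices and arcs
    (hV : ∀ u ∈ V, u.length = n)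
    (harc : ∀ u ∈ V, ∀ b : A, u ++ [b] ∈ L → u.tail ++ [b] ∈ V)
    -- the graph is Eulerian: balanced in/out degrees ...
    (hbal : ∀ u ∈ V, {b : A | u ++ [b] ∈ L}.ncard =
      {a : A | (a :: u.dropLast) ∈ V ∧ (a :: u) ∈ L}.ncard)
    -- ... and strongly connected
    (hconn : ∀ u ∈ V, ∀ w ∈ V, Relation.ReflTransGen
      (fun x y => x ∈ V ∧ ∃ b : A, x ++ [b] ∈ L ∧ y = x.tail ++ [b]) u w)
    -- m is the lexicographically maximal vertex
    (hm : m ∈ V)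
    (hmax : ∀ u ∈ V, u = m ∨ List.Lex (· < ·) u m)
    -- γ u is the maximal label of an arc leaving u, for u ≠ m
    (hγ : ∀ u ∈ V, u ≠ m → u ++ [γ u] ∈ L ∧ ∀ b : A, u ++ [b] ∈ L → b ≤ γ u)
    -- s is the label of a walk starting at m ...
    (hwalk : ∀ i (hi : i < s.length), dbVtx m s i ++ [s.get ⟨i, hi⟩] ∈ L)
    -- ... which never repeats an arc ...
    (honce : ∀ i j (hi : i < s.length) (hj : j < s.length),
      dbVtx m s i = dbVtx m s j → s.get ⟨i, hi⟩ = s.get ⟨j, hj⟩ → i = j)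
    -- ... always takes the unvisited arc of minimal label ...
    (hmin : ∀ i (hi : i < s.length), ∀ b : A, dbVtx m s i ++ [b] ∈ L →
      (∀ j (hj : j < i), ¬(dbVtx m s j = dbVtx m s i ∧ s.get ⟨j, by omega⟩ = b)) →
      s.get ⟨i, hi⟩ ≤ b)
    -- ... and stops only when every outgoing arc of the final vertex has been used
    (hstop : ∀ b : A, dbVtx m s s.length ++ [b] ∈ L →
      ∃ (j : ℕ) (hj : j < s.length), dbVtx m s j = dbVtx m s s.length ∧ s.get ⟨j, hj⟩ = b) :
    -- the walk is an Eulerian circuit iff T is a spanning tree converging to m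
    ((∀ u ∈ V, ∀ b : A, u ++ [b] ∈ L →
        ∃ (i : ℕ) (hi : i < s.length), dbVtx m s i = u ∧ s.get ⟨i, hi⟩ = b) ∧
      s.foldl dbStep m = m)
    ↔ (∀ u ∈ V, Relation.ReflTransGen
        (fun x y => x ∈ V ∧ x ≠ m ∧ x ++ [γ x] ∈ L ∧ y = x.tail ++ [γ x]) u m) := by
    classical
  have hmlen : m.length = n := hV m hm
  have hmne : m ≠ [] := by intro h; rw [h] at hmlen; simp at hmlen; omega
  haveI : Inhabited A := ⟨m.head hmne⟩
  -- total label function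
  set g : ℕ → A := fun i => s.getD i default with hgdef
  have hg : ∀ {i : ℕ} (hi : i < s.length), s.get ⟨i, hi⟩ = g i := by
    intro i hi
    simp only [hgdef, List.get_eq_getElem]
    exact (List.getD_eq_getElem s default hi).symm
  have hvtx0 : dbVtx m s 0 = m := by simp [dbVtx]
  have hstep : ∀ i, i < s.length → dbVtx m s (i + 1) = (dbVtx m s i).tail ++ [g i] := by
    intro i hi
    have h1 : s.take (i + 1) = s.take i ++ [g i] := by
      rw [List.take_succ, List.getElem?_eq_getElem hi]
      have : g i = s[i] := List.getD_eq_getElem s default hi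
      rw [this]; rfl
    simp [dbVtx, h1, List.foldl_append, dbStep]
  have hVi : ∀ i, i ≤ s.length → dbVtx m s i ∈ V := by
    intro i
    induction i with
    | zero => intro _; rw [hvtx0]; exact hm
    | succ i ih =>
      intro h
      have hi : i < s.length := by omega
      rw [hstep i hi]
      have hw := hwalk i hi
      rw [hg hi] at hw
      exact harc _ (ih (by omega)) _ hw
  have hlen_i : ∀ i, i ≤ s.length → (dbVtx m s i).length = n := fun i h => hV _ (hVi i h)
  have hwalk' : ∀ i, i < s.length → dbVtx m s i ++ [g i] ∈ L := by
    intro i hi; have := hwalk i hi; rwa [hg hi] at this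
  -- exit / entry / out / in finsets
  set Ex : List A → Finset ℕ :=
    fun v => (Finset.range s.length).filter (fun i => dbVtx m s i = v) with hExdef
  set En : List A → Finset ℕ :=
    fun v => (Finset.range s.length).filter (fun i => dbVtx m s (i + 1) = v) with hEndef
  set Out : List A → Finset A :=
    fun v => Finset.univ.filter (fun b => v ++ [b] ∈ L) with hOutdef
  set Inn : List A → Finset A :=
    fun v => Finset.univ.filter (fun a => a :: v.dropLast ∈ V ∧ a :: v ∈ L) with hInndef
  have hExmem : ∀ (v : List A) (i : ℕ), i ∈ Ex v ↔ i < s.length ∧ dbVtx m s i = v := by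
    intro v i; simp [hExdef]
  have hEnmem : ∀ (v : List A) (i : ℕ), i ∈ En v ↔ i < s.length ∧ dbVtx m s (i + 1) = v := by
    intro v i; simp [hEndef]
  have hOutmem : ∀ (v : List A) (b : A), b ∈ Out v ↔ v ++ [b] ∈ L := by
    intro v b; simp [hOutdef]
  have hInnmem : ∀ (v : List A) (a : A), a ∈ Inn v ↔ a :: v.dropLast ∈ V ∧ a :: v ∈ L := by
    intro v a; simp [hInndef]
  have hbal' : ∀ u ∈ V, (Out u).card = (Inn u).card := by
    intro u hu
    have h1 : {b : A | u ++ [b] ∈ L} = ↑(Out u) := by ext b; simp [hOutdef]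
    have h2 : {a : A | (a :: u.dropLast) ∈ V ∧ (a :: u) ∈ L} = ↑(Inn u) := by
      ext a; simp [hInndef]
    have := hbal u hu
    rwa [h1, h2, Set.ncard_coe_finset, Set.ncard_coe_finset] at this
  have hgInj : ∀ v : List A, Set.InjOn g ↑(Ex v) := by
    intro v i hi j hj hij
    rw [Finset.mem_coe, hExmem] at hi hj
    exact honce i j hi.1 hj.1 (hi.2.trans hj.2.symm) (by rw [hg hi.1, hg hj.1]; exact hij)
  have hgSub : ∀ v, (Ex v).image g ⊆ Out v := by
    intro v b hb
    obtain ⟨i, hiEx, rfl⟩ := Finset.mem_image.1 hb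
    rw [hExmem] at hiEx
    obtain ⟨hi, hvi⟩ := hiEx
    have := hwalk' i hi
    rw [hvi] at this
    rw [hOutmem]
    exact this
  have hExle : ∀ v, (Ex v).card ≤ (Out v).card := by
    intro v
    calc (Ex v).card = ((Ex v).image g).card := (Finset.card_image_of_injOn (hgInj v)).symm
      _ ≤ (Out v).card := Finset.card_le_card (hgSub v)
  -- comparison of two arc decompositions
  have hcmp : ∀ (x y : List A) (b c : A), x.length = n → y.length = n →
      x.tail ++ [b] = y.tail ++ [c] → x.head! = y.head! → x = y ∧ b = c := by
    intro x y b c hx hy he hh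
    have hxne : x ≠ [] := by intro e; rw [e] at hx; simp at hx; omega
    have hyne : y ≠ [] := by intro e; rw [e] at hy; simp at hy; omega
    have hlt : x.tail.length = y.tail.length := by simp [hx, hy]
    obtain ⟨h1, h2⟩ := List.append_inj he hlt
    have h2' : b = c := by simpa using h2
    refine ⟨?_, h2'⟩
    calc x = x.head! :: x.tail := (List.cons_head!_tail hxne).symm
      _ = y.head! :: y.tail := by rw [hh, h1]
      _ = y := List.cons_head!_tail hyne
  set hd : ℕ → A := fun i => (dbVtx m s i).head! with hhddef
  have hdInj : ∀ v, Set.InjOn hd ↑(En v) := by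
    intro v i hi j hj hij
    rw [Finset.mem_coe, hEnmem] at hi hj
    have e1 := hstep i hi.1
    have e2 := hstep j hj.1
    have hc := hcmp (dbVtx m s i) (dbVtx m s j) (g i) (g j)
      (hlen_i i hi.1.le) (hlen_i j hj.1.le)
      (by rw [← e1, ← e2, hi.2, hj.2]) hij
    exact honce i j hi.1 hj.1 hc.1 (by rw [hg hi.1, hg hj.1]; exact hc.2)
  have hdSub : ∀ v, (En v).image hd ⊆ Inn v := by
    intro v a ha
    obtain ⟨i, hiEn, rfl⟩ := Finset.mem_image.1 ha
    rw [hEnmem] at hiEn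
    obtain ⟨hi, hvi⟩ := hiEn
    have e := hstep i hi
    have hx := hlen_i i hi.le
    have hxne : dbVtx m s i ≠ [] := by intro h; rw [h] at hx; simp at hx; omega
    have hdrop : v.dropLast = (dbVtx m s i).tail := by
      rw [← hvi, e, List.dropLast_concat]
    rw [hInnmem]
    constructor
    · rw [hhddef, hdrop, List.cons_head!_tail hxne]
      exact hVi i hi.le
    · have : hd i :: v = dbVtx m s i ++ [g i] := by
        rw [← hvi, e, hhddef, ← List.cons_append, List.cons_head!_tail hxne]
      rw [this]
      exact hwalk' i hi
  have hEnle : ∀ v, (En v).card ≤ (Inn v).card := by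
    intro v
    calc (En v).card = ((En v).image hd).card := (Finset.card_image_of_injOn (hdInj v)).symm
      _ ≤ (Inn v).card := Finset.card_le_card (hdSub v)
  -- key counting identity
  have hkey : ∀ (N : ℕ) (v : List A),
      ((Finset.range N).filter (fun i => dbVtx m s i = v)).card
        + (if dbVtx m s N = v then 1 else 0)
      = ((Finset.range N).filter (fun i => dbVtx m s (i + 1) = v)).card
        + (if m = v then 1 else 0) := by
    intro N v
    induction N with
    | zero => simp [hvtx0]
    | succ N ih =>
      rw [Finset.range_add_one, Finset.filter_insert, Finset.filter_insert]
      have hnm : ∀ (p : ℕ → Prop) (_ : DecidablePred p),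
          N ∉ (Finset.range N).filter p := by
        intro p _ hc
        exact absurd (Finset.mem_filter.1 hc).1 (by simp)
      by_cases h1 : dbVtx m s N = v <;> by_cases h2 : dbVtx m s (N + 1) = v <;>
        by_cases h3 : m = v
      all_goals (first | rw [if_pos h1] | rw [if_neg h1])
      all_goals (first | rw [if_pos h2] | rw [if_neg h2])
      all_goals (first | rw [if_pos h2] | rw [if_neg h2])
      all_goals (first | rw [if_pos h3] | rw [if_neg h3])
      all_goals (first | rw [if_pos h1] at ih | rw [if_neg h1] at ih)
      all_goals (first | rw [if_pos h3] at ih | rw [if_neg h3] at ih)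
      all_goals repeat rw [Finset.card_insert_of_notMem (hnm _ _)]
      all_goals omega
  have hkey' : ∀ v, (Ex v).card + (if dbVtx m s s.length = v then 1 else 0)
      = (En v).card + (if m = v then 1 else 0) := by
    intro v
    have := hkey s.length v
    rw [hExdef, hEndef]
    exact this
  -- claim 1: the walk ends at m
  have hclaim1 : dbVtx m s s.length = m := by
    by_contra hne
    have hfV : dbVtx m s s.length ∈ V := hVi _ le_rfl
    have hOutSub : Out (dbVtx m s s.length) ⊆ (Ex (dbVtx m s s.length)).image g := by
      intro b hb
      rw [hOutmem] at hb
      obtain ⟨j, hj, hvj, hgj⟩ := hstop b hb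
      refine Finset.mem_image.2 ⟨j, (hExmem _ _).2 ⟨hj, hvj⟩, by rw [← hg hj]; exact hgj⟩
    have hExf : (Out (dbVtx m s s.length)).card ≤ (Ex (dbVtx m s s.length)).card := by
      calc (Out (dbVtx m s s.length)).card ≤ ((Ex (dbVtx m s s.length)).image g).card :=
            Finset.card_le_card hOutSub
        _ = (Ex (dbVtx m s s.length)).card := Finset.card_image_of_injOn (hgInj _)
    have h1 := hkey' (dbVtx m s s.length)
    rw [if_pos rfl, if_neg (fun h => hne h.symm)] at h1
    have h2 := hEnle (dbVtx m s s.length)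
    have h3 := hbal' _ hfV
    omega
  -- "used" and "exhausted"
  have hExh_final : ∀ b, m ++ [b] ∈ L →
      ∃ (i : ℕ) (hi : i < s.length), dbVtx m s i = m ∧ s.get ⟨i, hi⟩ = b := by
    intro b hb
    obtain ⟨j, hj, h1, h2⟩ := hstop b (by rw [hclaim1]; exact hb)
    exact ⟨j, hj, h1.trans hclaim1, h2⟩
  -- Lemma B: if the γ-arc of v was used, v is exhausted
  have hB : ∀ v ∈ V, v ≠ m →
      (∃ (i : ℕ) (hi : i < s.length), dbVtx m s i = v ∧ s.get ⟨i, hi⟩ = γ v) →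
      ∀ b, v ++ [b] ∈ L →
        ∃ (i : ℕ) (hi : i < s.length), dbVtx m s i = v ∧ s.get ⟨i, hi⟩ = b := by
    rintro v hv hvm ⟨i, hi, hvi, hgi⟩ b hb
    by_cases hub : ∃ (j : ℕ) (hj : j < s.length), dbVtx m s j = v ∧ s.get ⟨j, hj⟩ = b
    · exact hub
    · exfalso
      have hle : s.get ⟨i, hi⟩ ≤ b := by
        apply hmin i hi b (by rw [hvi]; exact hb)
        intro j hj hc
        exact hub ⟨j, by omega, hc.1.trans hvi, hc.2⟩
      rw [hgi] at hle
      have hble : b ≤ γ v := (hγ v hv hvm).2 b hb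
      exact hub ⟨i, hi, hvi, by rw [hgi]; exact le_antisymm hle hble⟩
  -- Lemma C: if v is exhausted, every in-arc of v was used
  have hC : ∀ v ∈ V,
      (∀ b, v ++ [b] ∈ L →
        ∃ (i : ℕ) (hi : i < s.length), dbVtx m s i = v ∧ s.get ⟨i, hi⟩ = b) →
      ∀ x ∈ V, ∀ b : A, x ++ [b] ∈ L → x.tail ++ [b] = v →
        ∃ (i : ℕ) (hi : i < s.length), dbVtx m s i = x ∧ s.get ⟨i, hi⟩ = b := by
    intro v hv hexh x hx b hbL hxb
    have hOutSub : Out v ⊆ (Ex v).image g := by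
      intro c hc
      rw [hOutmem] at hc
      obtain ⟨j, hj, hvj, hgj⟩ := hexh c hc
      refine Finset.mem_image.2 ⟨j, (hExmem _ _).2 ⟨hj, hvj⟩, by rw [← hg hj]; exact hgj⟩
    have hcardEx : (Ex v).card = (Out v).card := by
      refine le_antisymm (hExle v) ?_
      calc (Out v).card ≤ ((Ex v).image g).card := Finset.card_le_card hOutSub
        _ = (Ex v).card := Finset.card_image_of_injOn (hgInj v)
    have hcardEn : (Ex v).card ≤ (En v).card := by
      have h1 := hkey' v
      rw [hclaim1] at h1
      omega
    have himg : (En v).image hd = Inn v := by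
      apply Finset.eq_of_subset_of_card_le (hdSub v)
      rw [Finset.card_image_of_injOn (hdInj v)]
      calc (Inn v).card = (Out v).card := (hbal' v hv).symm
        _ = (Ex v).card := hcardEx.symm
        _ ≤ (En v).card := hcardEn
    have hxlen : x.length = n := hV x hx
    have hxne : x ≠ [] := by intro e; rw [e] at hxlen; simp at hxlen; omega
    have hdropv : v.dropLast = x.tail := by rw [← hxb, List.dropLast_concat]
    have haIn : x.head! ∈ Inn v := by
      rw [hInnmem]
      constructor
      · rw [hdropv, List.cons_head!_tail hxne]; exact hx
      · have : x.head! :: v = x ++ [b] := by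
          rw [← hxb, ← List.cons_append, List.cons_head!_tail hxne]
        rw [this]; exact hbL
    rw [← himg] at haIn
    obtain ⟨i, hiEn, hdi⟩ := Finset.mem_image.1 haIn
    rw [hEnmem] at hiEn
    have hc := hcmp (dbVtx m s i) x (g i) b (hlen_i i hiEn.1.le) hxlen
      (by rw [← hstep i hiEn.1, hiEn.2, hxb]) hdi
    exact ⟨i, hiEn.1, hc.1, by rw [hg hiEn.1]; exact hc.2⟩
  have hfold : s.foldl dbStep m = m := by
    have : dbVtx m s s.length = s.foldl dbStep m := by simp [dbVtx]
    rw [← this, hclaim1]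
  constructor
  · -- Eulerian circuit → T converges to m
    rintro ⟨hall, -⟩ u hu
    have hne' : ∀ u, u ∈ V → u ≠ m → (Ex u).Nonempty := by
      intro u hu hum
      obtain ⟨i, hi, h1, h2⟩ := hall u hu (γ u) (hγ u hu hum).1
      exact ⟨i, (hExmem _ _).2 ⟨hi, h1⟩⟩
    have main : ∀ (k : ℕ) (u : List A) (hu : u ∈ V) (hum : u ≠ m),
        s.length - (Ex u).max' (hne' u hu hum) ≤ k →
        Relation.ReflTransGen
          (fun x y => x ∈ V ∧ x ≠ m ∧ x ++ [γ x] ∈ L ∧ y = x.tail ++ [γ x]) u m := by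
      intro k
      induction k with
      | zero =>
        intro u hu hum hk
        exfalso
        have := (hExmem _ _).1 (Finset.max'_mem (Ex u) (hne' u hu hum))
        omega
      | succ k ih =>
        intro u hu hum hk
        obtain ⟨hilt, hiv⟩ : (Ex u).max' (hne' u hu hum) < s.length ∧
            dbVtx m s ((Ex u).max' (hne' u hu hum)) = u :=
          (hExmem _ _).1 (Finset.max'_mem (Ex u) (hne' u hu hum))
        set i := (Ex u).max' (hne' u hu hum) with hidef
        have hlab : g i = γ u := by
          have hbU : u ++ [g i] ∈ L := by
            have := hwalk' i hilt; rwa [hiv] at this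
          have hle : g i ≤ γ u := (hγ u hu hum).2 _ hbU
          obtain ⟨j, hj, hvj, hgj⟩ := hall u hu (γ u) (hγ u hu hum).1
          have hjle : j ≤ i := Finset.le_max' _ j ((hExmem _ _).2 ⟨hj, hvj⟩)
          have hge : γ u ≤ g i := by
            have h := hmin j hj (g i) (by rw [hvj]; exact hbU) ?_
            · rw [hgj] at h; exact h
            · rintro j' hj' ⟨e1, e2⟩
              have hj'lt : j' < s.length := by omega
              have := honce j' i hj'lt hilt (by rw [e1, hvj, hiv])
                (by rw [e2, hg hilt])
              omega
          exact le_antisymm hle hge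
        have hw : dbVtx m s (i + 1) = u.tail ++ [γ u] := by
          rw [hstep i hilt, hiv, hlab]
        have hrel : u ∈ V ∧ u ≠ m ∧ u ++ [γ u] ∈ L ∧
            u.tail ++ [γ u] = u.tail ++ [γ u] := ⟨hu, hum, (hγ u hu hum).1, rfl⟩
        by_cases hwm : u.tail ++ [γ u] = m
        · exact Relation.ReflTransGen.single ⟨hu, hum, (hγ u hu hum).1, hwm.symm⟩
        · have hwV : u.tail ++ [γ u] ∈ V := harc u hu _ (hγ u hu hum).1
          have hi1 : i + 1 < s.length := by
            rcases Nat.lt_or_ge (i + 1) s.length with h | h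
            · exact h
            · exfalso
              have : i + 1 = s.length := by omega
              rw [this, hclaim1] at hw
              exact hwm hw.symm
          have hmem : i + 1 ∈ Ex (u.tail ++ [γ u]) := (hExmem _ _).2 ⟨hi1, hw⟩
          have hmax2 : i + 1 ≤ (Ex (u.tail ++ [γ u])).max' (hne' _ hwV hwm) :=
            Finset.le_max' _ _ hmem
          exact Relation.ReflTransGen.head ⟨hu, hum, (hγ u hu hum).1, rfl⟩
            (ih _ hwV hwm (by omega))
    by_cases hum : u = m
    · rw [hum]
    · exact main s.length u hu hum (by omega)
  · -- T converges to m → Eulerian circuit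
    intro hT
    refine ⟨?_, hfold⟩
    have main : ∀ u : List A,
        Relation.ReflTransGen
          (fun x y => x ∈ V ∧ x ≠ m ∧ x ++ [γ x] ∈ L ∧ y = x.tail ++ [γ x]) u m →
        u ∈ V →
        ∀ b, u ++ [b] ∈ L →
          ∃ (i : ℕ) (hi : i < s.length), dbVtx m s i = u ∧ s.get ⟨i, hi⟩ = b := by
      intro u hru
      induction hru using Relation.ReflTransGen.head_induction_on with
      | refl => intro _ b hb; exact hExh_final b hb
      | @head a c hrel hrtg ih =>
        intro _
        obtain ⟨haV, ham, haL, hceq⟩ := hrel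
        have hcV : c ∈ V := by rw [hceq]; exact harc a haV (γ a) haL
        have hexc := ih hcV
        have hused := hC c hcV hexc a haV (γ a) haL hceq.symm
        exact hB a haV ham hused
    intro u hu b hb
    exact main u (hT u hu) hu b hb
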